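/- (Existence of an iterative δ-descent.) Let A be a commutative algebra over a field K of characteristic p > 0 and δ a K-derivation of A such that there exist elements y_0, y_1, …, y_{n−1} ∈ A with y_k^p = 0 and δ^{p^k}(y_k) = 1 for all 0 ≤ k ≤ n−1. Then there exists an iterative δ-descent {x^{[i]} : 0 ≤ i < p^n} of exponent n in A with x^{[1]} = y_0. -/

import Mathlib

/-- A derivation of a ring: an additive map satisfying the Leibniz rule. -/
def IsDerivation {R : Type*} [Ring R] (δ : R → R) : Prop :=
  (∀ a b : R, δ (a + b) = δ a + δ b) ∧ (∀ a b : R, δ (a * b) = δ a * b + a * δ b)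

/-- An iterative sequence `{x^{[i]} : 0 ≤ i < p^n}` in a ring of characteristic `p`
(where by convention `x^{[k]} := 0` for `k ≥ p^n`). -/
def IsIterativeSeq (p n : ℕ) {R : Type*} [Ring R] (x : ℕ → R) : Prop :=
  (∀ k : ℕ, p ^ n ≤ k → x k = 0) ∧
  ∀ i < p ^ n, ∀ j < p ^ n, x i * x j = ((i + j).choose i : R) * x (i + j)

/-- An iterative `δ`-descent of exponent `n`. -/
def IsIterativeDescent (p n : ℕ) {R : Type*} [Ring R] (δ : R → R) (x : ℕ → R) : Prop :=
  IsIterativeSeq p n x ∧ x 0 = 1 ∧ ∀ i : ℕ, 1 ≤ i → i < p ^ n → δ (x i) = x (i - 1)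

set_option linter.unusedSectionVars false
set_option linter.unusedVariables false
set_option maxHeartbeats 1000000

open Finset

namespace Stmt15Aux



/-- The `j`-th base-`p` digit of `i`. -/
def dig (p j i : ℕ) : ℕ := i / p ^ j % p

theorem dig_lt {p : ℕ} (hp : 2 ≤ p) (j i : ℕ) : dig p j i < p :=
  Nat.mod_lt _ (by omega)

theorem dig_zero_of_ge {p n i : ℕ} (hp : 2 ≤ p) (hi : i < p ^ n) {m : ℕ} (h : n ≤ m) :
    dig p m i = 0 := by
  have : i < p ^ m := lt_of_lt_of_le hi (Nat.pow_le_pow_right (by omega) h)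
  simp [dig, Nat.div_eq_of_lt this]

/-- no carries: division of sum distributes -/
theorem div_add_of_digits {p i j : ℕ} (hp : 2 ≤ p)
    (h : ∀ m, dig p m i + dig p m j < p) :
    ∀ m, (i + j) / p ^ m = i / p ^ m + j / p ^ m := by
  intro m
  induction m with
  | zero => simp
  | succ m ih =>
    have hpm : (0:ℕ) < p := by omega
    have h1 : (i + j) / p ^ (m+1) = ((i + j) / p ^ m) / p := by
      rw [pow_succ, Nat.div_div_eq_div_mul]
    have h2 : i / p ^ (m+1) = (i / p ^ m) / p := by
      rw [pow_succ, Nat.div_div_eq_div_mul]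
    have h3 : j / p ^ (m+1) = (j / p ^ m) / p := by
      rw [pow_succ, Nat.div_div_eq_div_mul]
    rw [h1, h2, h3, ih, Nat.add_div hpm]
    have := h m
    simp only [dig] at this
    simp [Nat.not_le.2 this]

theorem dig_add_of_digits {p i j : ℕ} (hp : 2 ≤ p)
    (h : ∀ m, dig p m i + dig p m j < p) (m : ℕ) :
    dig p m (i + j) = dig p m i + dig p m j := by
  have := h m
  simp only [dig] at this ⊢
  rw [div_add_of_digits hp h m, Nat.add_mod, Nat.mod_eq_of_lt this]

theorem add_lt_pow_of_digits {p n i j : ℕ} (hp : 2 ≤ p) (hi : i < p ^ n) (hj : j < p ^ n)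
    (h : ∀ m, dig p m i + dig p m j < p) : i + j < p ^ n := by
  have := div_add_of_digits hp h n
  rw [Nat.div_eq_of_lt hi, Nat.div_eq_of_lt hj] at this
  have hpos : (0:ℕ) < p ^ n := by positivity
  rcases Nat.lt_or_ge (i+j) (p^n) with h' | h'
  · exact h'
  · have := Nat.div_le_div_right (c := p ^ n) h'
    rw [Nat.div_self hpos] at this
    omega

theorem exists_carry {p n i j : ℕ} (hp : 2 ≤ p) (hi : i < p ^ n) (hj : j < p ^ n)
    (hij : p ^ n ≤ i + j) : ∃ m < n, p ≤ dig p m i + dig p m j := by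
  by_contra hc
  push_neg at hc
  have h : ∀ m, dig p m i + dig p m j < p := by
    intro m
    rcases lt_or_ge m n with hm | hm
    · exact hc m hm
    · rw [dig_zero_of_ge hp hi hm, dig_zero_of_ge hp hj hm]; omega
  exact absurd (add_lt_pow_of_digits hp hi hj h) (by omega)

/-- all digits zero below `t` implies divisible by `p^t` -/
theorem mod_pow_eq_zero {p i : ℕ} (hp : 2 ≤ p) {t : ℕ} (h : ∀ m < t, dig p m i = 0) :
    i % p ^ t = 0 := by
  induction t with
  | zero => simp [Nat.mod_one]
  | succ t ih =>
    have h0 := ih (fun m hm => h m (by omega))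
    have h1 := h t (by omega)
    simp only [dig] at h1
    have h2 : i % p ^ (t+1) = i % p ^ t + p ^ t * (i / p ^ t % p) := Nat.mod_pow_succ
    rw [h2, h0, h1]; ring

theorem eq_zero_of_digs_zero {p n i : ℕ} (hp : 2 ≤ p) (hi : i < p ^ n)
    (h : ∀ m < n, dig p m i = 0) : i = 0 := by
  have := mod_pow_eq_zero hp h
  rw [Nat.mod_eq_of_lt hi] at this
  exact this



theorem mul_add_div' {a t r : ℕ} (ha : 0 < a) (hr : r < a) : (a * t + r) / a = t := by
  rw [Nat.mul_add_div ha, Nat.div_eq_of_lt hr, Nat.add_zero]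

theorem mul_add_mod' {a t r : ℕ} (hr : r < a) : (a * t + r) % a = r := by
  rw [Nat.mul_add_mod, Nat.mod_eq_of_lt hr]

section Pred
variable {p i j0 : ℕ} (hp : 2 ≤ p) (h0 : ∀ m < j0, dig p m i = 0) (hne : dig p j0 i ≠ 0)

include hp h0 in
theorem eq_pow_mul_div : i = p ^ j0 * (i / p ^ j0) := by
  have hmod : i % p ^ j0 = 0 := by
    induction j0 with
    | zero => simp [Nat.mod_one]
    | succ t ih =>
      have ha := ih (fun m hm => h0 m (by omega))
      have hb := h0 t (by omega)
      simp only [dig] at hb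
      have h2 : i % p ^ (t+1) = i % p ^ t + p ^ t * (i / p ^ t % p) := Nat.mod_pow_succ
      rw [h2, ha, hb]; ring
  have := Nat.mod_add_div i (p ^ j0)
  omega

include hp h0 hne in
theorem div_pred_le {m : ℕ} (hm : m ≤ j0) :
    (i - 1) / p ^ m = p ^ (j0 - m) * (i / p ^ j0 - 1) + (p ^ (j0 - m) - 1) := by
  set q := i / p ^ j0 with hq
  have hq1 : 1 ≤ q := by
    rcases Nat.eq_zero_or_pos q with h | h
    · exfalso; apply hne; simp [dig, ← hq, h]
    · exact h
  have hi : i = p ^ j0 * q := eq_pow_mul_div hp h0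
  have hpm : 1 ≤ p ^ m := Nat.one_le_pow _ _ (by omega)
  have hpj : 1 ≤ p ^ (j0 - m) := Nat.one_le_pow _ _ (by omega)
  have hmul : p ^ m * p ^ (j0 - m) = p ^ j0 := by
    rw [← pow_add]; congr 1; omega
  have hsplit : i - 1 = p ^ m * (p ^ (j0 - m) * (q - 1) + (p ^ (j0 - m) - 1)) + (p ^ m - 1) := by
    rw [hi, ← hmul]
    have hP : 1 ≤ p ^ m * p ^ (j0 - m) * q := Nat.one_le_iff_ne_zero.mpr (by positivity)
    zify [hq1, hpm, hpj, hP]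
    ring
  rw [hsplit, mul_add_div' (by omega) (by omega)]

include hp h0 hne in
theorem dig_pred_lt {m : ℕ} (hm : m < j0) : dig p m (i - 1) = p - 1 := by
  have hd := div_pred_le hp h0 hne (le_of_lt hm)
  simp only [dig, hd]
  set q := i / p ^ j0 with hq
  have hq1 : 1 ≤ q := by
    rcases Nat.eq_zero_or_pos q with h | h
    · exfalso; apply hne; simp [dig, ← hq, h]
    · exact h
  have h1 : 1 ≤ j0 - m := by omega
  have hB : p ^ (j0 - m) = p * p ^ (j0 - m - 1) := by rw [← pow_succ']; congr 1; omega
  have hpj : 1 ≤ p ^ (j0 - m - 1) := Nat.one_le_pow _ _ (by omega)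
  have hT : p ^ (j0 - m) * (q - 1) + (p ^ (j0 - m) - 1)
      = p * (p ^ (j0 - m - 1) * (q - 1) + (p ^ (j0 - m - 1) - 1)) + (p - 1) := by
    rw [hB]
    have hPB : 1 ≤ p * p ^ (j0 - m - 1) := Nat.one_le_iff_ne_zero.mpr (by positivity)
    zify [hq1, hpj, hPB, show (1:ℕ) ≤ p by omega]
    ring
  rw [hT, mul_add_mod' (by omega)]

include hp h0 hne in
theorem dig_pred_self : dig p j0 (i - 1) = dig p j0 i - 1 := by
  have hd := div_pred_le hp h0 hne (le_refl j0)
  simp only [Nat.sub_self, pow_zero, one_mul] at hd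
  set q := i / p ^ j0 with hq
  have ha : q % p ≠ 0 := hne
  have hlt := Nat.mod_lt q (show 0 < p by omega)
  have hql : 1 ≤ q := by
    rcases Nat.eq_zero_or_pos q with h | h
    · exfalso; apply ha; simp [h]
    · exact h
  have hq2 : q - 1 = p * (q / p) + (q % p - 1) := by
    have := Nat.mod_add_div q p
    omega
  simp only [dig, hd]
  have : q - 1 + (1 - 1) = p * (q / p) + (q % p - 1) := by omega
  rw [this, mul_add_mod' (by omega)]

include hp h0 hne in
theorem dig_pred_gt {m : ℕ} (hm : j0 < m) : dig p m (i - 1) = dig p m i := by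
  have hd := div_pred_le hp h0 hne (le_refl j0)
  simp only [Nat.sub_self, pow_zero, one_mul] at hd
  set q := i / p ^ j0 with hq
  have ha : q % p ≠ 0 := hne
  have hlt := Nat.mod_lt q (show 0 < p by omega)
  have hql : 1 ≤ q := by
    rcases Nat.eq_zero_or_pos q with h | h
    · exfalso; apply ha; simp [h]
    · exact h
  have hmm : p ^ m = p ^ j0 * p ^ (m - j0) := by rw [← pow_add]; congr 1; omega
  have h1 : (i - 1) / p ^ m = (q - 1 + (1-1)) / p ^ (m - j0) := by
    rw [hmm, ← Nat.div_div_eq_div_mul, hd]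
  have h2 : i / p ^ m = q / p ^ (m - j0) := by
    rw [hmm, ← Nat.div_div_eq_div_mul, ← hq]
  have h3 : (q - 1) / p ^ (m - j0) = q / p ^ (m - j0) := by
    have hmj : 1 ≤ m - j0 := by omega
    have hB : p ^ (m - j0) = p * p ^ (m - j0 - 1) := by rw [← pow_succ']; congr 1; omega
    rw [hB, ← Nat.div_div_eq_div_mul, ← Nat.div_div_eq_div_mul]
    congr 1
    have hq2 : q - 1 = p * (q / p) + (q % p - 1) := by
      have := Nat.mod_add_div q p
      omega
    rw [hq2, mul_add_div' (by omega) (by omega)]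
  simp only [dig, h1, h2]
  rw [show q - 1 + (1-1) = q - 1 by omega, h3]

end Pred

theorem dig_pow_pred {p k m : ℕ} (hp : 2 ≤ p) (hm : m < k) : dig p m (p ^ k - 1) = p - 1 := by
  have hpm : 1 ≤ p ^ m := Nat.one_le_pow _ _ (by omega)
  have hpk : 1 ≤ p ^ (k - m) := Nat.one_le_pow _ _ (by omega)
  have hmul : p ^ m * p ^ (k - m) = p ^ k := by rw [← pow_add]; congr 1; omega
  have hsplit : p ^ k - 1 = p ^ m * (p ^ (k - m) - 1) + (p ^ m - 1) := by
    rw [← hmul]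
    have hP : 1 ≤ p ^ m * p ^ (k - m) := Nat.one_le_iff_ne_zero.mpr (by positivity)
    zify [hpm, hpk, hP]
    ring
  have h1 : (p ^ k - 1) / p ^ m = p ^ (k - m) - 1 := by
    rw [hsplit, mul_add_div' (by omega) (by omega)]
  simp only [dig, h1]
  have hk1 : 1 ≤ k - m := by omega
  have hB : p ^ (k - m) = p * p ^ (k - m - 1) := by rw [← pow_succ']; congr 1; omega
  have hpj : 1 ≤ p ^ (k - m - 1) := Nat.one_le_pow _ _ (by omega)
  have h3 : p ^ (k - m) - 1 = p * (p ^ (k - m - 1) - 1) + (p - 1) := by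
    rw [hB]
    have hPB : 1 ≤ p * p ^ (k - m - 1) := Nat.one_le_iff_ne_zero.mpr (by positivity)
    zify [hpj, hPB, show (1:ℕ) ≤ p by omega]
    ring
  rw [h3, mul_add_mod' (by omega)]



theorem dig_succ (p m i : ℕ) : dig p (m+1) i = dig p m (i / p) := by
  simp only [dig]
  rw [Nat.div_div_eq_div_mul, ← pow_succ']

theorem choose_zmod_zero_base {p : ℕ} (hp : p.Prime) {i j : ℕ}
    (h : p ≤ i % p + j % p) : (((i+j).choose i : ℕ) : ZMod p) = 0 := by
  haveI : Fact p.Prime := ⟨hp⟩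
  have hp2 : 2 ≤ p := hp.two_le
  have h1 : i % p < p := Nat.mod_lt _ (by omega)
  have h2 : j % p < p := Nat.mod_lt _ (by omega)
  have hmod : (i + j) % p = i % p + j % p - p := by
    rw [Nat.add_mod, Nat.mod_eq_sub_mod (by omega), Nat.mod_eq_of_lt (by omega)]
  have hzero : ((i+j) % p).choose (i % p) = 0 := by
    apply Nat.choose_eq_zero_of_lt
    omega
  have hlucas := Choose.choose_modEq_choose_mod_mul_choose_div_nat (n := i + j) (k := i) (p := p)
  rw [(ZMod.natCast_eq_natCast_iff _ _ _).2 hlucas]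
  push_cast
  rw [hzero]
  push_cast
  ring

theorem choose_zmod_zero {p : ℕ} (hp : p.Prime) {m i j : ℕ}
    (h : p ≤ dig p m i + dig p m j) : (((i+j).choose i : ℕ) : ZMod p) = 0 := by
  haveI : Fact p.Prime := ⟨hp⟩
  have hp2 : 2 ≤ p := hp.two_le
  induction m generalizing i j with
  | zero =>
    simp only [dig, pow_zero, Nat.div_one] at h
    exact choose_zmod_zero_base hp h
  | succ m ih =>
    by_cases hc : p ≤ i % p + j % p
    · exact choose_zmod_zero_base hp hc
    · push_neg at hc
      rw [dig_succ, dig_succ] at h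
      have hdiv : (i + j) / p = i / p + j / p := by
        rw [Nat.add_div (show 0 < p by omega), if_neg (by omega)]
        omega
      have hlucas := Choose.choose_modEq_choose_mod_mul_choose_div_nat
        (n := i + j) (k := i) (p := p)
      rw [(ZMod.natCast_eq_natCast_iff _ _ _).2 hlucas]
      push_cast
      rw [hdiv]
      have := ih h
      push_cast at this
      rw [this]
      ring

theorem choose_zmod_prod {p n i j : ℕ} (hp : p.Prime)
    (hij : i + j < p ^ n) (h : ∀ m, dig p m i + dig p m j < p)
    (hdig : ∀ m, dig p m (i + j) = dig p m i + dig p m j) :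
    (((i+j).choose i : ℕ) : ZMod p) =
      ∏ m ∈ range n, (((dig p m i + dig p m j).choose (dig p m i) : ℕ) : ZMod p) := by
  haveI : Fact p.Prime := ⟨hp⟩
  have hp2 : 2 ≤ p := hp.two_le
  have hlucas := Choose.choose_modEq_choose_mul_prod_range_choose
    (n := i + j) (k := i) (p := p) n
  have hin : i / p ^ n = 0 := Nat.div_eq_of_lt (by omega)
  have hijn : (i + j) / p ^ n = 0 := Nat.div_eq_of_lt (by omega)
  have hcast := (ZMod.intCast_eq_intCast_iff _ _ _).2 hlucas
  push_cast at hcast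
  rw [hin, hijn] at hcast
  simp only [Nat.choose_self, Nat.cast_one, one_mul] at hcast
  rw [hcast]
  apply Finset.prod_congr rfl
  intro m _
  have h1 : (i + j) / p ^ m % p = dig p m i + dig p m j := hdig m
  simp only [dig] at h1 ⊢
  rw [h1]




section Alg
variable (K A : Type*) [Field K] [CommRing A] [Algebra K A]

/-- inverse factorial constant -/
noncomputable def cc (m : ℕ) : A := algebraMap K A (((m.factorial : ℕ) : K))⁻¹

variable {p : ℕ} [CharP K p]

theorem factorial_cast_ne_zero (hp : p.Prime) {m : ℕ} (hm : m < p) :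
    ((m.factorial : ℕ) : K) ≠ 0 := by
  rw [Ne, CharP.cast_eq_zero_iff K p, hp.dvd_factorial]
  omega

theorem cc_zero : cc K A 0 = 1 := by simp [cc]

theorem cc_one : cc K A 1 = 1 := by simp [cc]

variable {K A}

theorem cc_mul (hp : p.Prime) {a b : ℕ} (hab : a + b < p) :
    cc K A a * cc K A b = ((a + b).choose a : A) * cc K A (a + b) := by
  have ha := factorial_cast_ne_zero K hp (show a < p by omega)
  have hb := factorial_cast_ne_zero K hp (show b < p by omega)
  have hab' := factorial_cast_ne_zero K hp hab
  have key : ((a.factorial : ℕ) : K)⁻¹ * ((b.factorial : ℕ) : K)⁻¹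
      = ((a + b).choose a : ℕ) * (((a+b).factorial : ℕ) : K)⁻¹ := by
    have hfact : (a + b).choose a * a.factorial * b.factorial = (a + b).factorial := by
      rw [Nat.choose_symm_add]
      exact Nat.add_choose_mul_factorial_mul_factorial a b
    field_simp
    rw [← hfact]
    push_cast
    ring
  simp only [cc]
  rw [← map_mul, key, map_mul]
  congr 1
  simp [map_natCast]

theorem cc_pred (hp : p.Prime) {a : ℕ} (h1 : 1 ≤ a) (h2 : a < p) :
    cc K A a * (a : A) = cc K A (a - 1) := by
  have ha : ((a : ℕ) : K) ≠ 0 := by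
    rw [Ne, CharP.cast_eq_zero_iff K p]
    intro hd
    have := Nat.le_of_dvd (by omega) hd
    omega
  have hfa := factorial_cast_ne_zero K hp h2
  have key : ((a.factorial : ℕ) : K)⁻¹ * (a : K) = (((a-1).factorial : ℕ) : K)⁻¹ := by
    have hfact : a.factorial = a * (a-1).factorial := by
      conv_lhs => rw [show a = (a-1) + 1 by omega]
      rw [Nat.factorial_succ]
      congr 2
      omega
    have hf1 := factorial_cast_ne_zero K hp (show a - 1 < p by omega)
    rw [hfact] at hfa ⊢
    push_cast at hfa ⊢
    field_simp
  simp only [cc]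
  rw [show ((a : ℕ) : A) = algebraMap K A ((a : ℕ) : K) by simp [map_natCast], ← map_mul, key]

theorem cc_isUnitImage (m : ℕ) : ∃ k : K, cc K A m = algebraMap K A k := ⟨_, rfl⟩

end Alg

section Deriv
variable {A : Type*} [CommRing A] {δ : A → A} (hδ : IsDerivation δ)

include hδ

theorem deriv_add (a b : A) : δ (a + b) = δ a + δ b := hδ.1 a b

theorem deriv_zero : δ 0 = 0 := by
  have h := hδ.1 0 0
  simp only [add_zero] at h
  exact (left_eq_add.mp h)

theorem deriv_one : δ 1 = 0 := by
  have h := hδ.2 1 1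
  simp only [mul_one, one_mul] at h
  exact (left_eq_add.mp h)

/-- δ as an AddMonoidHom -/
noncomputable def derivHom : A →+ A := AddMonoidHom.mk' δ hδ.1

@[simp] theorem derivHom_apply (a : A) : derivHom hδ a = δ a := rfl

theorem deriv_sum {ι : Type*} (s : Finset ι) (f : ι → A) :
    δ (∑ i ∈ s, f i) = ∑ i ∈ s, δ (f i) := by
  exact map_sum (derivHom hδ) f s

theorem deriv_pow (a : A) (m : ℕ) : δ (a ^ m) = (m : A) * a ^ (m - 1) * δ a := by
  induction m with
  | zero => simpa using deriv_one hδ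
  | succ m ih =>
    rcases Nat.eq_zero_or_pos m with hm | hm
    · subst hm
      norm_num
    · rw [pow_succ, hδ.2, ih]
      have : m - 1 + 1 = m := by omega
      push_cast
      calc ((m:A) * a ^ (m-1) * δ a) * a + a ^ m * δ a
          = (m : A) * (a ^ (m-1) * a) * δ a + a ^ m * δ a := by ring
        _ = (m : A) * a ^ m * δ a + a ^ m * δ a := by rw [← pow_succ, this]
        _ = ((m:A) + 1) * a ^ (m + 1 - 1) * δ a := by simp; ring

theorem deriv_prod {ι : Type*} [DecidableEq ι] (s : Finset ι) (f : ι → A) :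
    δ (∏ j ∈ s, f j) = ∑ j ∈ s, δ (f j) * ∏ m ∈ s.erase j, f m := by
  induction s using Finset.induction_on with
  | empty => simpa using deriv_one hδ
  | insert a s ha ih =>
    rw [Finset.prod_insert ha, hδ.2, ih, Finset.sum_insert ha, Finset.erase_insert ha]
    congr 1
    rw [Finset.mul_sum]
    apply Finset.sum_congr rfl
    intro j hj
    have hja : j ≠ a := fun h => ha (h ▸ hj)
    rw [Finset.erase_insert_of_ne hja.symm, Finset.prod_insert (fun h => ha (Finset.mem_of_mem_erase h))]
    ring
end Deriv

section XX
variable {K A : Type*} [Field K] [CommRing A] [Algebra K A]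
variable {p : ℕ} [CharP K p]

/-- the iterative sequence built from `z` -/
noncomputable def XX (K : Type*) {A : Type*} [Field K] [CommRing A] [Algebra K A]
    (p n : ℕ) (z : ℕ → A) (i : ℕ) : A :=
  if i < p ^ n then ∏ j ∈ Finset.range n, (cc K A (dig p j i) * z j ^ (dig p j i)) else 0

theorem XX_of_lt {n : ℕ} (z : ℕ → A) {i : ℕ} (h : i < p ^ n) :
    XX K p n z i = ∏ j ∈ Finset.range n, (cc K A (dig p j i) * z j ^ (dig p j i)) :=
  if_pos h

theorem XX_of_ge {n : ℕ} (z : ℕ → A) {i : ℕ} (h : p ^ n ≤ i) : XX K p n z i = 0 :=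
  if_neg (by omega)

theorem XX_zero (hp : p.Prime) {n : ℕ} (z : ℕ → A) : XX K p n z 0 = 1 := by
  have h0 : (0:ℕ) < p ^ n := pow_pos hp.pos n
  rw [XX_of_lt z h0]
  apply Finset.prod_eq_one
  intro j hj
  have : dig p j 0 = 0 := by simp [dig]
  rw [this, cc_zero, pow_zero, one_mul]

theorem exists_dig_ne (hp : p.Prime) {n i : ℕ} (h1 : 1 ≤ i) (h2 : i < p ^ n) :
    ∃ m < n, dig p m i ≠ 0 := by
  by_contra hc
  push_neg at hc
  have := eq_zero_of_digs_zero hp.two_le h2 hc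
  omega

theorem XX_pow_eq_zero (hp : p.Prime) {n : ℕ} {z : ℕ → A}
    (hz : ∀ j < n, z j ^ p = 0) {i : ℕ} (h1 : 1 ≤ i) (h2 : i < p ^ n) :
    XX K p n z i ^ p = 0 := by
  obtain ⟨m, hm, hne⟩ := exists_dig_ne hp h1 h2
  have hdvd : z m ^ dig p m i ∣ XX K p n z i := by
    rw [XX_of_lt z h2]
    exact Dvd.dvd.trans (dvd_mul_left _ _) (Finset.dvd_prod_of_mem _ (Finset.mem_range.2 hm))
  have hdvd2 : (z m ^ dig p m i) ^ p ∣ XX K p n z i ^ p := pow_dvd_pow_of_dvd hdvd p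
  rw [← pow_mul] at hdvd2
  have hdvd3 : z m ^ p ∣ z m ^ (dig p m i * p) :=
    pow_dvd_pow _ (by have := hp.two_le; nlinarith [Nat.one_le_iff_ne_zero.2 hne])
  have : z m ^ p ∣ XX K p n z i ^ p := hdvd3.trans hdvd2
  rw [hz m hm] at this
  exact zero_dvd_iff.1 this

theorem XX_iterative (hp : p.Prime) [CharP A p] {n : ℕ} {z : ℕ → A}
    (hz : ∀ j < n, z j ^ p = 0) {i j : ℕ} (hi : i < p ^ n) (hj : j < p ^ n) :
    XX K p n z i * XX K p n z j = ((i + j).choose i : A) * XX K p n z (i + j) := by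
  have hp2 := hp.two_le
  by_cases hc : ∃ m < n, p ≤ dig p m i + dig p m j
  · -- carry: both sides vanish
    obtain ⟨m, hm, hcm⟩ := hc
    have hL : XX K p n z i * XX K p n z j = 0 := by
      have d1 : z m ^ dig p m i ∣ XX K p n z i := by
        rw [XX_of_lt z hi]
        exact Dvd.dvd.trans (dvd_mul_left _ _) (Finset.dvd_prod_of_mem _ (Finset.mem_range.2 hm))
      have d2 : z m ^ dig p m j ∣ XX K p n z j := by
        rw [XX_of_lt z hj]
        exact Dvd.dvd.trans (dvd_mul_left _ _) (Finset.dvd_prod_of_mem _ (Finset.mem_range.2 hm))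
      have d3 : z m ^ (dig p m i + dig p m j) ∣ XX K p n z i * XX K p n z j := by
        rw [pow_add]; exact mul_dvd_mul d1 d2
      have d4 : z m ^ p ∣ XX K p n z i * XX K p n z j :=
        (pow_dvd_pow _ hcm).trans d3
      rw [hz m hm] at d4
      exact zero_dvd_iff.1 d4
    rw [hL]
    have hcast : (((i + j).choose i : ℕ) : A) = 0 := by
      have hz0 : (((i+j).choose i : ℕ) : ZMod p) = 0 := choose_zmod_zero hp hcm
      haveI : Fact p.Prime := ⟨hp⟩
      have := congrArg (ZMod.castHom (dvd_refl p) A) hz0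
      simpa using this
    rw [hcast, zero_mul]
  · -- no carry
    push_neg at hc
    have hall : ∀ m, dig p m i + dig p m j < p := by
      intro m
      rcases lt_or_ge m n with hm | hm
      · exact hc m hm
      · rw [dig_zero_of_ge hp2 hi hm, dig_zero_of_ge hp2 hj hm]; omega
    have hlt : i + j < p ^ n := add_lt_pow_of_digits hp2 hi hj hall
    have hdig := fun m => dig_add_of_digits hp2 hall m
    rw [XX_of_lt z hi, XX_of_lt z hj, XX_of_lt z hlt, ← Finset.prod_mul_distrib]
    have hfac : ∀ m ∈ Finset.range n,
        (cc K A (dig p m i) * z m ^ dig p m i) * (cc K A (dig p m j) * z m ^ dig p m j)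
        = (((dig p m i + dig p m j).choose (dig p m i) : ℕ) : A) *
          (cc K A (dig p m (i+j)) * z m ^ dig p m (i+j)) := by
      intro m _
      rw [hdig m]
      have := cc_mul (K := K) (A := A) hp (hall m)
      calc (cc K A (dig p m i) * z m ^ dig p m i) * (cc K A (dig p m j) * z m ^ dig p m j)
          = (cc K A (dig p m i) * cc K A (dig p m j)) * z m ^ (dig p m i + dig p m j) := by
            rw [pow_add]; ring
        _ = _ := by rw [this]; push_cast; ring
    rw [Finset.prod_congr rfl hfac, Finset.prod_mul_distrib]
    congr 1
    -- product of binomial casts equals cast of big binomial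
    haveI : Fact p.Prime := ⟨hp⟩
    have hzmod := choose_zmod_prod (n := n) hp hlt hall hdig
    have := congrArg (ZMod.castHom (dvd_refl p) A) hzmod
    simpa using this.symm

theorem deriv_cc_mul {δ : A → A} (hδ : IsDerivation δ)
    (hδK : ∀ c : K, δ (algebraMap K A c) = 0) (m : ℕ) (t : A) :
    δ (cc K A m * t) = cc K A m * δ t := by
  rw [hδ.2, show δ (cc K A m) = 0 from hδK _, zero_mul, zero_add]

theorem erase_range_eq {j0 n : ℕ} (h : j0 < n) :
    (Finset.range n).erase j0 = Finset.range j0 ∪ Finset.Ico (j0+1) n := by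
  ext m
  simp only [Finset.mem_erase, Finset.mem_range, Finset.mem_union, Finset.mem_Ico]
  omega

theorem XX_deriv (hp : p.Prime) {δ : A → A} (hδ : IsDerivation δ)
    (hδK : ∀ c : K, δ (algebraMap K A c) = 0) {n : ℕ} {z : ℕ → A}
    (hz1 : ∀ j < n, z j ^ p = 0)
    (hz2 : ∀ j < n, δ (z j) = ∏ m ∈ Finset.range j, (cc K A (p-1) * z m ^ (p-1)))
    {i : ℕ} (h1 : 1 ≤ i) (h2 : i < p ^ n) :
    δ (XX K p n z i) = XX K p n z (i - 1) := by
  classical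
  have hp2 := hp.two_le
  have hex : ∃ m, dig p m i ≠ 0 := by
    obtain ⟨m, _, hm⟩ := exists_dig_ne hp h1 h2
    exact ⟨m, hm⟩
  set j0 := Nat.find hex with hj0def
  have hne : dig p j0 i ≠ 0 := Nat.find_spec hex
  have h0 : ∀ m < j0, dig p m i = 0 := fun m hm => not_not.mp (Nat.find_min hex hm)
  have hj0n : j0 < n := by
    by_contra hc
    exact hne (dig_zero_of_ge hp2 h2 (by omega))
  set f : ℕ → A := fun j => cc K A (dig p j i) * z j ^ dig p j i with hf
  rw [XX_of_lt z h2, deriv_prod hδ]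
  rw [Finset.sum_eq_single j0]
  · -- main term
    set a := dig p j0 i with hadef
    have ha1 : 1 ≤ a := Nat.one_le_iff_ne_zero.2 hne
    have halt : a < p := dig_lt hp2 _ _
    set W : A := ∏ m ∈ Finset.range j0, (cc K A (p-1) * z m ^ (p-1)) with hW
    have hdf : δ (f j0) = cc K A a * ((a : A) * z j0 ^ (a-1) * δ (z j0)) := by
      rw [hf]
      simp only
      rw [deriv_cc_mul hδ hδK, deriv_pow hδ]
    have hE : ∏ m ∈ (Finset.range n).erase j0, f m = ∏ m ∈ Finset.Ico (j0+1) n, f m := by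
      rw [erase_range_eq hj0n, Finset.prod_union (by
        rw [Finset.disjoint_left]
        intro x hx hx2
        simp only [Finset.mem_range] at hx
        simp only [Finset.mem_Ico] at hx2
        omega)]
      have hone : ∏ m ∈ Finset.range j0, f m = 1 := by
        apply Finset.prod_eq_one
        intro m hm
        simp only [Finset.mem_range] at hm
        rw [hf]
        simp only
        rw [h0 m hm, cc_zero, pow_zero, one_mul]
      rw [hone, one_mul]
    have hi1 : i - 1 < p ^ n := by omega
    rw [XX_of_lt z hi1]
    have hIco : ∏ m ∈ Finset.Ico (j0+1) n, (cc K A (dig p m (i-1)) * z m ^ dig p m (i-1))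
        = ∏ m ∈ Finset.Ico (j0+1) n, f m := by
      apply Finset.prod_congr rfl
      intro m hm
      simp only [Finset.mem_Ico] at hm
      rw [dig_pred_gt hp2 h0 hne (by omega)]
    have hRange : ∏ m ∈ Finset.range j0, (cc K A (dig p m (i-1)) * z m ^ dig p m (i-1)) = W := by
      apply Finset.prod_congr rfl
      intro m hm
      simp only [Finset.mem_range] at hm
      rw [dig_pred_lt hp2 h0 hne hm]
    have hsplit : ∏ m ∈ Finset.range n, (cc K A (dig p m (i-1)) * z m ^ dig p m (i-1))
        = W * (cc K A (a-1) * z j0 ^ (a-1)) * ∏ m ∈ Finset.Ico (j0+1) n, f m := by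
      rw [Finset.range_eq_Ico, ← Finset.prod_Ico_consecutive _ (Nat.zero_le (j0+1)) (by omega : j0+1 ≤ n),
        ← Finset.range_eq_Ico, Finset.prod_range_succ, hRange, hIco,
        dig_pred_self hp2 h0 hne, ← hadef]
    rw [hdf, hE, hsplit, hz2 j0 hj0n, ← hW]
    have hcp := cc_pred (K := K) (A := A) hp ha1 halt
    calc cc K A a * ((a:A) * z j0 ^ (a-1) * W) * ∏ m ∈ Finset.Ico (j0+1) n, f m
        = (cc K A a * (a:A)) * (z j0 ^ (a-1) * W * ∏ m ∈ Finset.Ico (j0+1) n, f m) := by ring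
      _ = cc K A (a-1) * (z j0 ^ (a-1) * W * ∏ m ∈ Finset.Ico (j0+1) n, f m) := by rw [hcp]
      _ = W * (cc K A (a-1) * z j0 ^ (a-1)) * ∏ m ∈ Finset.Ico (j0+1) n, f m := by ring
  · -- other terms vanish
    intro b hb hbne
    simp only [Finset.mem_range] at hb
    by_cases hab : dig p b i = 0
    · have hzero : δ (f b) = 0 := by
        rw [hf]
        simp only
        rw [deriv_cc_mul hδ hδK, deriv_pow hδ, hab]
        push_cast
        ring
      rw [hzero, zero_mul]
    · have hj0b : j0 < b := by
        rcases Nat.lt_trichotomy b j0 with h | h | h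
        · exact absurd (h0 b h) hab
        · exact absurd h hbne
        · exact h
      have hd1 : z j0 ^ (p-1) ∣ δ (z b) := by
        rw [hz2 b hb]
        exact (dvd_mul_left _ _).trans (Finset.dvd_prod_of_mem _ (Finset.mem_range.2 hj0b))
      have hd1' : z j0 ^ (p-1) ∣ δ (f b) := by
        have heq : δ (f b) = δ (z b) *
            (cc K A (dig p b i) * ((dig p b i : A) * z b ^ (dig p b i - 1))) := by
          rw [hf]
          simp only
          rw [deriv_cc_mul hδ hδK, deriv_pow hδ]
          ring
        rw [heq]
        exact hd1.trans (dvd_mul_right _ _)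
      have hj0mem : j0 ∈ (Finset.range n).erase b :=
        Finset.mem_erase.2 ⟨by omega, Finset.mem_range.2 hj0n⟩
      have hd2 : z j0 ^ (dig p j0 i) ∣ ∏ m ∈ (Finset.range n).erase b, f m :=
        (dvd_mul_left _ _).trans (Finset.dvd_prod_of_mem _ hj0mem)
      have hd3 : z j0 ^ (p-1) * z j0 ^ (dig p j0 i) ∣ δ (f b) * ∏ m ∈ (Finset.range n).erase b, f m :=
        mul_dvd_mul hd1' hd2
      have hd4 : z j0 ^ p ∣ δ (f b) * ∏ m ∈ (Finset.range n).erase b, f m := by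
        refine Dvd.dvd.trans ?_ hd3
        rw [← pow_add]
        exact pow_dvd_pow _ (by have := Nat.one_le_iff_ne_zero.2 hne; omega)
      rw [hz1 j0 hj0n] at hd4
      exact zero_dvd_iff.1 hd4
  · intro hn
    exact absurd (Finset.mem_range.2 hj0n) hn

theorem XX_iterate (hp : p.Prime) {δ : A → A} (hδ : IsDerivation δ)
    (hδK : ∀ c : K, δ (algebraMap K A c) = 0) {n : ℕ} {z : ℕ → A}
    (hz1 : ∀ j < n, z j ^ p = 0)
    (hz2 : ∀ j < n, δ (z j) = ∏ m ∈ Finset.range j, (cc K A (p-1) * z m ^ (p-1)))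
    {i : ℕ} (h2 : i < p ^ n) :
    ∀ t ≤ i, δ^[t] (XX K p n z i) = XX K p n z (i - t) := by
  intro t
  induction t with
  | zero => intro _; simp
  | succ t ih =>
    intro ht
    rw [Function.iterate_succ_apply', ih (by omega),
      XX_deriv hp hδ hδK hz1 hz2 (by omega) (by omega)]
    congr 1

theorem build_z (hp : p.Prime) [CharP A p] {δ : A → A} (hδ : IsDerivation δ)
    (hδK : ∀ c : K, δ (algebraMap K A c) = 0) {n : ℕ} (y : ℕ → A)
    (hyp : ∀ k < n, y k ^ p = 0) (hyd : ∀ k < n, δ^[p^k] (y k) = 1) :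
    ∀ k, k ≤ n → ∃ z : ℕ → A, (∀ j < k, z j ^ p = 0) ∧
      (∀ j < k, δ (z j) = ∏ m ∈ Finset.range j, (cc K A (p-1) * z m ^ (p-1))) ∧
      (0 < k → z 0 = y 0) := by
  classical
  have hp2 := hp.two_le
  intro k
  induction k with
  | zero => exact fun _ => ⟨fun _ => 0, by omega, by omega, by omega⟩
  | succ k ih =>
    intro hk1
    obtain ⟨z, hz1, hz2, hz0⟩ := ih (by omega)
    have hkn : k < n := by omega
    set W : A := ∏ m ∈ Finset.range k, (cc K A (p-1) * z m ^ (p-1)) with hWdef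
    have hpk1 : 1 ≤ p ^ k := Nat.one_le_pow _ _ (by omega)
    have hWX : W = XX K p k z (p^k - 1) := by
      rw [XX_of_lt z (by omega)]
      apply Finset.prod_congr rfl
      intro m hm
      rw [dig_pow_pred hp2 (Finset.mem_range.1 hm)]
    have hWt : ∀ t ≤ p^k - 1, δ^[t] W = XX K p k z (p^k - 1 - t) := by
      intro t ht
      rw [hWX]
      exact XX_iterate hp hδ hδK hz1 hz2 (by omega) t ht
    have hW1 : δ^[p^k - 1] W = 1 := by
      rw [hWt _ le_rfl, Nat.sub_self, XX_zero hp z]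
    have hW0 : δ^[p^k] W = 0 := by
      rw [show p^k = (p^k - 1) + 1 by omega, Function.iterate_succ_apply', hW1, deriv_one hδ]
    set u : A := ∑ i ∈ Finset.range (p^k), (-1:A)^i * (δ^[i] W * δ^[p^k - 1 - i] (y k))
      with hudef
    have hnegone : δ (-1 : A) = 0 := by
      have := map_neg (derivHom hδ) 1
      simp only [derivHom_apply] at this
      rw [this, deriv_one hδ, neg_zero]
    have hdu : δ u = W := by
      set F : ℕ → A := fun i => (-1:A)^i * (δ^[i] W * δ^[p^k - i] (y k)) with hFdef
      have hterm : ∀ i ∈ Finset.range (p^k),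
          δ ((-1:A)^i * (δ^[i] W * δ^[p^k - 1 - i] (y k))) = F i - F (i+1) := by
        intro i hi
        have hi' := Finset.mem_range.1 hi
        have hneg : δ ((-1:A)^i) = 0 := by
          rw [deriv_pow hδ, hnegone]
          ring
        rw [hδ.2, hneg, zero_mul, zero_add, hδ.2,
          show δ (δ^[i] W) = δ^[i+1] W from (Function.iterate_succ_apply' δ i W).symm,
          show δ (δ^[p^k - 1 - i] (y k)) = δ^[p^k - i] (y k) by
            rw [show p^k - i = (p^k - 1 - i) + 1 by omega, Function.iterate_succ_apply']]
        simp only [hFdef]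
        rw [show p^k - (i+1) = p^k - 1 - i by omega, pow_succ]
        ring
      rw [hudef, deriv_sum hδ, Finset.sum_congr rfl hterm, Finset.sum_range_sub' F]
      simp only [hFdef]
      rw [show p^k - 0 = p^k by omega, hyd k hkn, hW0]
      simp
    have hup : u ^ p = 0 := by
      haveI : Fact p.Prime := ⟨hp⟩
      rw [hudef, sum_pow_char]
      apply Finset.sum_eq_zero
      intro i hi
      have hi' := Finset.mem_range.1 hi
      rw [mul_pow, mul_pow]
      rcases eq_or_lt_of_le (show i ≤ p^k - 1 by omega) with he | hlt
      · rw [show p^k - 1 - i = 0 by omega]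
        simp only [Function.iterate_zero, id_eq]
        rw [hyp k hkn]
        ring
      · rw [hWt i (by omega), XX_pow_eq_zero hp hz1 (by omega) (by omega)]
        ring
    refine ⟨Function.update z k u, ?_, ?_, ?_⟩
    · intro j hj
      by_cases hjk : j = k
      · subst hjk
        rw [Function.update_self]
        exact hup
      · rw [Function.update_of_ne hjk]
        exact hz1 j (by omega)
    · intro j hj
      have hprod : ∀ j' ≤ k, ∏ m ∈ Finset.range j', (cc K A (p-1) * Function.update z k u m ^ (p-1))
          = ∏ m ∈ Finset.range j', (cc K A (p-1) * z m ^ (p-1)) := by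
        intro j' hj'
        apply Finset.prod_congr rfl
        intro m hm
        rw [Function.update_of_ne (by have := Finset.mem_range.1 hm; omega)]
      by_cases hjk : j = k
      · subst hjk
        rw [Function.update_self, hdu, hprod j le_rfl]
      · rw [Function.update_of_ne hjk, hz2 j (by omega), hprod j (by omega)]
    · intro _
      rcases Nat.eq_zero_or_pos k with hk0 | hk0
      · subst hk0
        rw [Function.update_self, hudef]
        simp [hWdef]
      · rw [Function.update_of_ne (by omega)]
        exact hz0 hk0

end XX
end Stmt15Aux

/-- Existence of an iterative `δ`-descent. -/
theorem stmt15 {K A : Type*} [Field K] [CommRing A] [Algebra K A]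
    (p : ℕ) (hp : p.Prime) [CharP K p]
    (δ : A → A) (hδ : IsDerivation δ) (hδK : ∀ c : K, δ (algebraMap K A c) = 0)
    (n : ℕ) (y : Fin n → A)
    (hyp : ∀ k : Fin n, (y k) ^ p = 0)
    (hyd : ∀ k : Fin n, δ^[p ^ (k : ℕ)] (y k) = 1) :
    ∃ x : ℕ → A, IsIterativeDescent p n δ x ∧
      ∀ h0 : 0 < n, x 1 = y ⟨0, h0⟩ := by
  classical
  rcases subsingleton_or_nontrivial A with hA | hA
  · exact ⟨fun _ => 0, ⟨⟨fun _ _ => Subsingleton.elim _ _, fun _ _ _ _ => Subsingleton.elim _ _⟩,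
      Subsingleton.elim _ _, fun _ _ _ => Subsingleton.elim _ _⟩, fun _ => Subsingleton.elim _ _⟩
  · haveI : CharP A p := charP_of_injective_algebraMap (algebraMap K A).injective p
    have hp2 := hp.two_le
    set Y : ℕ → A := fun k => if h : k < n then y ⟨k, h⟩ else 0 with hY
    have hYp : ∀ k < n, Y k ^ p = 0 := by
      intro k hk
      simp only [hY]
      rw [dif_pos hk]
      exact hyp ⟨k, hk⟩
    have hYd : ∀ k < n, δ^[p^k] (Y k) = 1 := by
      intro k hk
      simp only [hY]
      rw [dif_pos hk]
      exact hyd ⟨k, hk⟩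
    obtain ⟨z, hz1, hz2, hz0⟩ := Stmt15Aux.build_z (K := K) hp hδ hδK Y hYp hYd n le_rfl
    refine ⟨Stmt15Aux.XX K p n z, ⟨⟨?_, ?_⟩, ?_, ?_⟩, ?_⟩
    · exact fun k hk => Stmt15Aux.XX_of_ge z hk
    · exact fun i hi j hj => Stmt15Aux.XX_iterative hp hz1 hi hj
    · exact Stmt15Aux.XX_zero hp z
    · exact fun i h1 h2 => Stmt15Aux.XX_deriv hp hδ hδK hz1 hz2 h1 h2
    · intro h0
      have h1n : (1:ℕ) < p ^ n := by
        calc (1:ℕ) < p := by omega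
          _ = p ^ 1 := (pow_one p).symm
          _ ≤ p ^ n := Nat.pow_le_pow_right (by omega) (by omega)
      rw [Stmt15Aux.XX_of_lt z h1n]
      have hd0 : Stmt15Aux.dig p 0 1 = 1 := by
        simp [Stmt15Aux.dig, Nat.mod_eq_of_lt (show 1 < p by omega)]
      have hdj : ∀ j, j ≠ 0 → Stmt15Aux.dig p j 1 = 0 := by
        intro j hj
        have : (1:ℕ) < p ^ j := by
          calc (1:ℕ) < p := by omega
            _ = p ^ 1 := (pow_one p).symm
            _ ≤ p ^ j := Nat.pow_le_pow_right (by omega) (by omega)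
        simp [Stmt15Aux.dig, Nat.div_eq_of_lt this]
      have hprod : ∏ j ∈ Finset.range n,
          (Stmt15Aux.cc K A (Stmt15Aux.dig p j 1) * z j ^ Stmt15Aux.dig p j 1) = z 0 := by
        rw [Finset.prod_eq_single 0]
        · rw [hd0, Stmt15Aux.cc_one, pow_one, one_mul]
        · intro b _ hb
          rw [hdj b hb, Stmt15Aux.cc_zero, pow_zero, one_mul]
        · intro h
          exact absurd (Finset.mem_range.2 (by omega)) h
      rw [hprod, hz0 h0]
      simp only [hY]
      rw [dif_pos h0]
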